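/- Let R > 1 and C, D > 0 be real numbers. Let S = ∑_{j≥0} s_j b^j and T = ∑_{j≥0} t_j b^j be formal power series with complex coefficients such that |s_j| ≤ C·R^j·j! and |t_j| ≤ D·R^j·j! for all j. Then the coefficients u_j of the product S·T = ∑_{j≥0} u_j b^j (so u_j = ∑_{p=0}^{j} s_{j−p}·t_p) satisfy |u_j| ≤ 3·C·D·R^j·j! for all j. -/

import Mathlib

lemma aux_fact_mul_fact_le {a b : ℕ} (ha : 1 ≤ a) (hb : 1 ≤ b) :
    a.factorial * b.factorial ≤ (a + b - 1).factorial := by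
  have hb1 : b - 1 ≤ a + b - 1 := by omega
  have key : (a + b - 1).choose (b - 1) * (b - 1).factorial * (a + b - 1 - (b - 1)).factorial
      = (a + b - 1).factorial := Nat.choose_mul_factorial_mul_factorial hb1
  have hsub : a + b - 1 - (b - 1) = a := by omega
  rw [hsub] at key
  have hch : b ≤ (a + b - 1).choose (b - 1) := by
    have hb2 : b.choose (b - 1) = b := by
      rw [Nat.choose_symm hb, Nat.choose_one_right]
    calc b = b.choose (b - 1) := hb2.symm
      _ ≤ (a + b - 1).choose (b - 1) := Nat.choose_le_choose _ (by omega)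
  calc a.factorial * b.factorial = b * ((b - 1).factorial * a.factorial) := by
        have : b.factorial = b * (b - 1).factorial := by
          conv_lhs => rw [show b = (b - 1) + 1 by omega]
          rw [Nat.factorial_succ]; congr 1; omega
        rw [this]; ring
    _ ≤ (a + b - 1).choose (b - 1) * ((b - 1).factorial * a.factorial) :=
        Nat.mul_le_mul_right _ hch
    _ = (a + b - 1).factorial := by rw [← key]; ring

lemma aux_sum_fact (j : ℕ) :
    ∑ p ∈ Finset.range (j + 1), p.factorial * (j - p).factorial ≤ 3 * j.factorial := by
  rcases Nat.eq_zero_or_pos j with h | h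
  · subst h; simp
  obtain ⟨m, rfl⟩ := Nat.exists_eq_add_of_lt h
  simp only [Nat.zero_add] at *
  set j := m + 1 with hj
  rw [Finset.sum_range_succ, Finset.sum_range_succ']
  have hmid : ∑ i ∈ Finset.range m, (i + 1).factorial * (j - (i + 1)).factorial
      ≤ m * m.factorial := by
    calc ∑ i ∈ Finset.range m, (i + 1).factorial * (j - (i + 1)).factorial
        ≤ ∑ _i ∈ Finset.range m, m.factorial := by
          apply Finset.sum_le_sum
          intro i hi
          simp only [Finset.mem_range] at hi
          have := aux_fact_mul_fact_le (a := i + 1) (b := j - (i + 1))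
            (by omega) (by omega)
          have heq : (i + 1) + (j - (i + 1)) - 1 = m := by omega
          rwa [heq] at this
      _ = m * m.factorial := by simp [mul_comm]
  have hfac : j.factorial = j * m.factorial := by
    rw [hj, Nat.factorial_succ]
  simp only [Nat.sub_self, Nat.factorial_zero, mul_one, Nat.sub_zero, Nat.factorial_zero,
    one_mul]
  have : m * m.factorial ≤ j.factorial := by
    rw [hfac]; exact Nat.mul_le_mul_right _ (by omega)
  omega

/-- Gevrey-type bounds `|s_j| ≤ C R^j j!`, `|t_j| ≤ D R^j j!` on the coefficients of two
formal power series imply the bound `|u_j| ≤ 3 C D R^j j!` on the coefficients of their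
product. -/
theorem stmt_3 (R C D : ℝ) (hR : 1 < R) (hC : 0 < C) (hD : 0 < D)
    (S T : PowerSeries ℂ)
    (hS : ∀ j : ℕ, ‖PowerSeries.coeff j S‖ ≤ C * R ^ j * j.factorial)
    (hT : ∀ j : ℕ, ‖PowerSeries.coeff j T‖ ≤ D * R ^ j * j.factorial) :
    ∀ j : ℕ, ‖PowerSeries.coeff j (S * T)‖ ≤ 3 * C * D * R ^ j * j.factorial := by
  intro j
  have hR0 : (0:ℝ) < R := lt_trans one_pos hR
  rw [PowerSeries.coeff_mul, Finset.Nat.sum_antidiagonal_eq_sum_range_succ_mk]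
  calc ‖∑ i ∈ Finset.range (j + 1), PowerSeries.coeff i S * PowerSeries.coeff (j - i) T‖
      ≤ ∑ i ∈ Finset.range (j + 1),
          ‖PowerSeries.coeff i S * PowerSeries.coeff (j - i) T‖ := norm_sum_le _ _
    _ ≤ ∑ i ∈ Finset.range (j + 1),
          C * D * R ^ j * (i.factorial * (j - i).factorial) := by
        apply Finset.sum_le_sum
        intro i hi
        simp only [Finset.mem_range] at hi
        rw [norm_mul]
        have h1 := hS i
        have h2 := hT (j - i)
        have hn1 : (0:ℝ) ≤ ‖PowerSeries.coeff i S‖ := norm_nonneg _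
        have hn2 : (0:ℝ) ≤ ‖PowerSeries.coeff (j - i) T‖ := norm_nonneg _
        calc ‖PowerSeries.coeff i S‖ * ‖PowerSeries.coeff (j - i) T‖
            ≤ (C * R ^ i * i.factorial) * (D * R ^ (j - i) * (j - i).factorial) := by
              apply mul_le_mul h1 h2 hn2
              positivity
          _ = C * D * (R ^ i * R ^ (j - i)) * (i.factorial * (j - i).factorial) := by ring
          _ = C * D * R ^ j * (i.factorial * (j - i).factorial) := by
              rw [← pow_add, Nat.add_sub_cancel' (by omega)]
    _ = C * D * R ^ j * ∑ i ∈ Finset.range (j + 1),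
          ((i.factorial : ℝ) * (j - i).factorial) := by rw [Finset.mul_sum]
    _ ≤ C * D * R ^ j * (3 * j.factorial) := by
        apply mul_le_mul_of_nonneg_left _ (by positivity)
        have := aux_sum_fact j
        calc ∑ i ∈ Finset.range (j + 1), ((i.factorial : ℝ) * (j - i).factorial)
            = ((∑ i ∈ Finset.range (j + 1), i.factorial * (j - i).factorial : ℕ) : ℝ) := by
              push_cast; rfl
          _ ≤ ((3 * j.factorial : ℕ) : ℝ) := by exact_mod_cast this
          _ = 3 * j.factorial := by push_cast; ring
    _ = 3 * C * D * R ^ j * j.factorial := by ring
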